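/- If the function Φ(X) = C(X,X,X) on the unit sphere of V attains a local maximum at a unit vector U, then for every unit vector W orthogonal to U one has C(U,U,W) = 0 and 2C(W,W,U) - C(U,U,U) ≤ 0; moreover, if 2C(W,W,U) - C(U,U,U) = 0 then C(W,W,W) = 0. -/

import Mathlib

open Real Filter Topology

lemma aux_q : Tendsto (fun t : ℝ => Real.sin t / t) (𝓝[≠] 0) (𝓝 1) := by
  have h := (Real.hasDerivAt_sin 0)
  rw [hasDerivAt_iff_tendsto_slope] at h
  simpa [slope_fun_def_field, Real.cos_zero, Real.sin_zero] using h

lemma aux_half : Tendsto (fun t : ℝ => t / 2) (𝓝[≠] 0) (𝓝[≠] 0) := by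
  apply tendsto_nhdsWithin_of_tendsto_nhds_of_eventually_within
  · exact ((continuous_id.div_const 2).tendsto' 0 0 (by norm_num)).mono_left nhdsWithin_le_nhds
  · filter_upwards [eventually_mem_nhdsWithin] with t ht
    simp only [Set.mem_compl_iff, Set.mem_singleton_iff] at *
    exact div_ne_zero ht two_ne_zero

lemma aux_r : Tendsto (fun t : ℝ => (Real.cos t - 1) / t ^ 2) (𝓝[≠] 0) (𝓝 (-(1/2))) := by
  have h : Tendsto (fun t : ℝ => -(1/2) * (Real.sin (t/2) / (t/2)) ^ 2) (𝓝[≠] 0)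
      (𝓝 (-(1/2) * 1 ^ 2)) :=
    tendsto_const_nhds.mul ((aux_q.comp aux_half).pow 2)
  rw [show (-(1/2) : ℝ) * 1 ^ 2 = -(1/2) by norm_num] at h
  apply h.congr'
  filter_upwards [eventually_mem_nhdsWithin] with t ht
  simp only [Set.mem_compl_iff, Set.mem_singleton_iff] at ht
  have hc : Real.cos t - 1 = -2 * Real.sin (t/2) ^ 2 := by
    have h1 : Real.cos (2 * (t/2)) = Real.cos (t/2) ^ 2 - Real.sin (t/2) ^ 2 :=
      Real.cos_two_mul' _
    have h2 := Real.sin_sq_add_cos_sq (t/2)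
    rw [show 2 * (t/2) = t by ring] at h1
    linarith
  rw [hc]
  field_simp

lemma aux_cubic (a b c d : ℝ)
    (hev : ∀ᶠ t in 𝓝 (0:ℝ),
      a * Real.cos t ^ 3 + 3*b * Real.cos t ^ 2 * Real.sin t
        + 3*c * Real.cos t * Real.sin t ^ 2 + d * Real.sin t ^ 3 - a ≤ 0) :
    b = 0 ∧ 2*c - a ≤ 0 ∧ (2*c - a = 0 → d = 0) := by
  set P : ℝ → ℝ := fun t => a * Real.cos t ^ 3 + 3*b * Real.cos t ^ 2 * Real.sin t
      + 3*c * Real.cos t * Real.sin t ^ 2 + d * Real.sin t ^ 3 - a with hPdef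
  have hcos : Tendsto Real.cos (𝓝[≠] (0:ℝ)) (𝓝 1) :=
    (Real.continuous_cos.tendsto' 0 1 Real.cos_zero).mono_left nhdsWithin_le_nhds
  have hsin : Tendsto Real.sin (𝓝[≠] (0:ℝ)) (𝓝 0) :=
    (Real.continuous_sin.tendsto' 0 0 Real.sin_zero).mono_left nhdsWithin_le_nhds
  have hid : Tendsto (fun t : ℝ => t) (𝓝[≠] (0:ℝ)) (𝓝 0) :=
    tendsto_id.mono_left nhdsWithin_le_nhds
  have hne : ∀ᶠ t : ℝ in 𝓝[≠] (0:ℝ), t ≠ 0 := eventually_mem_nhdsWithin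
  have hsubR : 𝓝[>] (0:ℝ) ≤ 𝓝[≠] (0:ℝ) :=
    nhdsWithin_mono 0 fun x hx => ne_of_gt hx
  have hsubL : 𝓝[<] (0:ℝ) ≤ 𝓝[≠] (0:ℝ) :=
    nhdsWithin_mono 0 fun x hx => ne_of_lt hx
  -- Step 1 : b = 0
  have T1 : Tendsto (fun t => P t / t) (𝓝[≠] (0:ℝ)) (𝓝 (3*b)) := by
    have h : Tendsto (fun t : ℝ =>
        a * ((Real.cos t - 1)/t^2) * t * (Real.cos t^2 + Real.cos t + 1)
        + (3*b * Real.cos t^2 * (Real.sin t / t)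
        + (3*c * Real.cos t * Real.sin t * (Real.sin t / t)
        + d * Real.sin t^2 * (Real.sin t / t)))) (𝓝[≠] (0:ℝ))
        (𝓝 (a * (-(1/2)) * 0 * (1^2 + 1 + 1)
          + (3*b * 1^2 * 1 + (3*c * 1 * 0 * 1 + d * 0^2 * 1)))) := by
      exact (((tendsto_const_nhds.mul aux_r).mul hid).mul
          (((hcos.pow 2).add hcos).add tendsto_const_nhds)).add
        (((tendsto_const_nhds.mul (hcos.pow 2)).mul aux_q).add
          (((((tendsto_const_nhds.mul hcos).mul hsin)).mul aux_q).add
            ((tendsto_const_nhds.mul (hsin.pow 2)).mul aux_q)))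
    rw [show a * (-(1/2)) * 0 * ((1:ℝ)^2 + 1 + 1)
          + (3*b * 1^2 * 1 + (3*c * 1 * 0 * 1 + d * 0^2 * 1)) = 3*b by ring] at h
    apply h.congr'
    filter_upwards [hne] with t ht
    simp only [hPdef]
    field_simp
    ring
  have hb : b = 0 := by
    have hR : Tendsto (fun t => P t / t) (𝓝[>] (0:ℝ)) (𝓝 (3*b)) :=
      T1.mono_left hsubR
    have hL : Tendsto (fun t => P t / t) (𝓝[<] (0:ℝ)) (𝓝 (3*b)) :=
      T1.mono_left hsubL
    have h1 : 3*b ≤ 0 := by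
      refine le_of_tendsto hR ?_
      filter_upwards [hev.filter_mono nhdsWithin_le_nhds, eventually_mem_nhdsWithin] with t h1 h2
      exact div_nonpos_of_nonpos_of_nonneg h1 (le_of_lt h2)
    have h2 : 0 ≤ 3*b := by
      refine ge_of_tendsto hL ?_
      filter_upwards [hev.filter_mono nhdsWithin_le_nhds, eventually_mem_nhdsWithin] with t h1 h2
      exact div_nonneg_iff.mpr (Or.inr ⟨h1, le_of_lt h2⟩)
    linarith
  -- Step 2 : 2c - a ≤ 0
  have T2 : Tendsto (fun t => P t / t^2) (𝓝[≠] (0:ℝ)) (𝓝 (3*c - 3/2*a)) := by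
    have h : Tendsto (fun t : ℝ =>
        a * ((Real.cos t - 1)/t^2) * (Real.cos t^2 + Real.cos t + 1)
        + (3*c * Real.cos t * (Real.sin t / t)^2
        + d * Real.sin t * (Real.sin t / t)^2)) (𝓝[≠] (0:ℝ))
        (𝓝 (a * (-(1/2)) * (1^2 + 1 + 1)
          + (3*c * 1 * 1^2 + d * 0 * 1^2))) := by
      exact ((tendsto_const_nhds.mul aux_r).mul
          (((hcos.pow 2).add hcos).add tendsto_const_nhds)).add
        (((tendsto_const_nhds.mul hcos).mul (aux_q.pow 2)).add
          ((tendsto_const_nhds.mul hsin).mul (aux_q.pow 2)))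
    rw [show a * (-(1/2)) * ((1:ℝ)^2 + 1 + 1)
          + (3*c * 1 * 1^2 + d * 0 * 1^2) = 3*c - 3/2*a by ring] at h
    apply h.congr'
    filter_upwards [hne] with t ht
    simp only [hPdef, hb]
    field_simp
    ring
  have hca : 2*c - a ≤ 0 := by
    have h1 : 3*c - 3/2*a ≤ 0 := by
      refine le_of_tendsto T2 ?_
      filter_upwards [hev.filter_mono nhdsWithin_le_nhds] with t h1
      exact div_nonpos_of_nonpos_of_nonneg h1 (by positivity)
    linarith
  refine ⟨hb, hca, fun h0 => ?_⟩
  -- Step 3 : d = 0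
  have ha2 : a = 2*c := by linarith
  have T3 : Tendsto (fun t => P t / t^3) (𝓝[≠] (0:ℝ)) (𝓝 d) := by
    have h : Tendsto (fun t : ℝ =>
        -c * ((Real.cos t - 1)/t^2)^2 * t * (Real.cos t + 2)
        + d * (Real.sin t / t)^3) (𝓝[≠] (0:ℝ))
        (𝓝 (-c * (-(1/2))^2 * 0 * (1 + 2) + d * 1^3)) := by
      exact (((tendsto_const_nhds.mul (aux_r.pow 2)).mul hid).mul
          (hcos.add tendsto_const_nhds)).add (tendsto_const_nhds.mul (aux_q.pow 3))
    rw [show -c * (-(1/2):ℝ)^2 * 0 * (1 + 2) + d * 1^3 = d by ring] at h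
    apply h.congr'
    filter_upwards [hne] with t ht
    have hs : Real.sin t ^ 2 = 1 - Real.cos t ^ 2 := by
      have := Real.sin_sq_add_cos_sq t; linarith
    have key : P t = -c * (Real.cos t - 1)^2 * (Real.cos t + 2) + d * Real.sin t ^ 3 := by
      simp only [hPdef, hb, ha2]
      rw [show Real.sin t ^ 3 = Real.sin t * Real.sin t ^ 2 by ring, hs]
      ring
    rw [key]
    field_simp
  have hdR : d ≤ 0 := by
    refine le_of_tendsto (T3.mono_left hsubR) ?_
    filter_upwards [hev.filter_mono nhdsWithin_le_nhds, eventually_mem_nhdsWithin] with t h1 h2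
    exact div_nonpos_of_nonpos_of_nonneg h1 (pow_nonneg (le_of_lt h2) 3)
  have hdL : 0 ≤ d := by
    refine ge_of_tendsto (T3.mono_left hsubL) ?_
    filter_upwards [hev.filter_mono nhdsWithin_le_nhds, eventually_mem_nhdsWithin] with t h1 h2
    have h3 : t^3 < 0 := Odd.pow_neg ⟨1, by norm_num⟩ h2
    exact div_nonneg_iff.mpr (Or.inr ⟨h1, le_of_lt h3⟩)
  linarith

open RealInnerProductSpace

/-- If `Φ(X) = C(X,X,X)` attains a local maximum on the unit sphere at `U`, then
for every unit `W ⟂ U`: `C(U,U,W) = 0`, `2C(W,W,U) - C(U,U,U) ≤ 0`, and if the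
latter vanishes then `C(W,W,W) = 0`. -/
theorem local_max_of_cubic_form
    {V : Type*} [NormedAddCommGroup V] [InnerProductSpace ℝ V]
    (C : V →ₗ[ℝ] V →ₗ[ℝ] V →ₗ[ℝ] ℝ)
    (hsym12 : ∀ X Y Z : V, C X Y Z = C Y X Z)
    (hsym23 : ∀ X Y Z : V, C X Y Z = C X Z Y)
    (U : V) (hU : ‖U‖ = 1)
    (hmax : IsLocalMaxOn (fun X : V => C X X X) {X : V | ‖X‖ = 1} U) :
    ∀ W : V, ‖W‖ = 1 → ⟪U, W⟫ = 0 →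
      C U U W = 0 ∧ 2 * C W W U - C U U U ≤ 0 ∧
        (2 * C W W U - C U U U = 0 → C W W W = 0) := by
  intro W hW hUW
  have hUWU : C U W U = C U U W := hsym23 U W U
  have hWUU : C W U U = C U U W := (hsym12 W U U).trans hUWU
  have hWUW : C W U W = C U W W := hsym12 W U W
  have hWWU : C W W U = C U W W := (hsym23 W W U).trans hWUW
  have hexp : ∀ p q : ℝ, C (p • U + q • W) (p • U + q • W) (p • U + q • W)
      = p^3 * C U U U + 3 * p^2 * q * C U U W + 3 * p * q^2 * C U W W
        + q^3 * C W W W := by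
    intro p q
    simp only [map_add, map_smul, LinearMap.add_apply, LinearMap.smul_apply, smul_eq_mul,
      hUWU, hWUU, hWUW, hWWU]
    ring
  have hmem : ∀ t : ℝ, (Real.cos t • U + Real.sin t • W) ∈ {X : V | ‖X‖ = 1} := by
    intro t
    have hin : ⟪Real.cos t • U, Real.sin t • W⟫ = 0 := by
      rw [real_inner_smul_left, real_inner_smul_right, hUW]; ring
    have hsq : ‖Real.cos t • U + Real.sin t • W‖ ^ 2 = 1 := by
      rw [norm_add_sq_real, hin, norm_smul, norm_smul, hU, hW]
      simp only [Real.norm_eq_abs, mul_one, mul_pow, sq_abs, mul_zero]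
      rw [add_zero]
      have := Real.sin_sq_add_cos_sq t
      linarith
    have hnn := norm_nonneg (Real.cos t • U + Real.sin t • W)
    show ‖Real.cos t • U + Real.sin t • W‖ = 1
    nlinarith
  have hγ : Tendsto (fun t : ℝ => Real.cos t • U + Real.sin t • W) (𝓝 0)
      (𝓝[{X : V | ‖X‖ = 1}] U) := by
    apply tendsto_nhdsWithin_of_tendsto_nhds_of_eventually_within
    · have hcont : Continuous fun t : ℝ => Real.cos t • U + Real.sin t • W :=
        (Real.continuous_cos.smul continuous_const).add
          (Real.continuous_sin.smul continuous_const)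
      have h0 : Real.cos 0 • U + Real.sin 0 • W = U := by simp
      simpa [h0] using hcont.tendsto 0
    · exact Filter.Eventually.of_forall hmem
  have hev : ∀ᶠ t in 𝓝 (0:ℝ),
      C U U U * Real.cos t ^ 3 + 3 * C U U W * Real.cos t ^ 2 * Real.sin t
        + 3 * C U W W * Real.cos t * Real.sin t ^ 2 + C W W W * Real.sin t ^ 3
        - C U U U ≤ 0 := by
    filter_upwards [hγ.eventually hmax] with t ht
    have := hexp (Real.cos t) (Real.sin t)
    have ht' : C (Real.cos t • U + Real.sin t • W) (Real.cos t • U + Real.sin t • W)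
        (Real.cos t • U + Real.sin t • W) ≤ C U U U := ht
    rw [this] at ht'
    linarith
  obtain ⟨hb, hca, hd⟩ := aux_cubic (C U U U) (C U U W) (C U W W) (C W W W)
    (by filter_upwards [hev] with t ht; linarith)
  refine ⟨hb, ?_, ?_⟩
  · rw [hWWU]; linarith
  · intro h0
    exact hd (by rw [hWWU] at h0; linarith)
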